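/- In the fixed run setting, for all terms t and all i ∈ {0,…,n}, if σ(T_i) ⊢dy t, then there is a typed normal ⊢dy proof of σ(T_i) ⊢ t. -/

import Mathlib

open scoped Classical

/-! ## Terms -/

inductive Term : Type
  | name : ℕ → Term
  | var  : ℕ → Term
  | pair : Term → Term → Term
  | enc  : Term → Term → Term
deriving DecidableEq

namespace Term

def subterms : Term → Set Term
  | name n => {name n}
  | var x => {var x}
  | pair a b => insert (pair a b) (subterms a ∪ subterms b)
  | enc a b => insert (enc a b) (subterms a ∪ subterms b)

def tvars : Term → Set ℕ
  | name _ => ∅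
  | var x => {x}
  | pair a b => tvars a ∪ tvars b
  | enc a b => tvars a ∪ tvars b

/-- A term is ground if it contains no variables. -/
def ground (t : Term) : Prop := tvars t = ∅

end Term

def sSubterms (X : Set Term) : Set Term := ⋃ t ∈ X, t.subterms
def sVars (X : Set Term) : Set ℕ := ⋃ t ∈ X, t.tvars
def varTerms (V : Set ℕ) : Set Term := Term.var '' V
def pairSubterms (E : Set (Term × Term)) : Set Term :=
  ⋃ e ∈ E, (Term.subterms e.1 ∪ Term.subterms e.2)

/-! ## Substitutions -/

abbrev Subst := ℕ → Term

namespace Subst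

def app (σ : Subst) : Term → Term
  | Term.name n => Term.name n
  | Term.var x => σ x
  | Term.pair a b => Term.pair (app σ a) (app σ b)
  | Term.enc a b => Term.enc (app σ a) (app σ b)

def dom (σ : Subst) : Set ℕ := {x | σ x ≠ Term.var x}

/-- A (totally) ground substitution. -/
def isGround (σ : Subst) : Prop := ∀ x, (σ x).ground

end Subst

def pairImg (σ : Subst) (E : Set (Term × Term)) : Set (Term × Term) :=
  (fun e => (σ.app e.1, σ.app e.2)) '' E

/-! ## Dolev-Yao derivability.  `inv` gives the inverse of a key. -/

inductive dy (inv : Term → Term) (X : Set Term) : Term → Prop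
  | ax {t} : t ∈ X → dy inv X t
  | pair {t u} : dy inv X t → dy inv X u → dy inv X (Term.pair t u)
  | enc {t k} : dy inv X t → dy inv X k → dy inv X (Term.enc t k)
  | fst {t u} : dy inv X (Term.pair t u) → dy inv X t
  | snd {t u} : dy inv X (Term.pair t u) → dy inv X u
  | dec {t k} : dy inv X (Term.enc t k) → dy inv X (inv k) → dy inv X t

/-! ## Positions -/

def positions : Term → Set (List Bool)
  | Term.pair a b =>
      insert [] ((List.cons false) '' positions a ∪ (List.cons true) '' positions b)
  | Term.enc a b =>
      insert [] ((List.cons false) '' positions a ∪ (List.cons true) '' positions b)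
  | _ => {[]}

def subtermAt : Term → List Bool → Option Term
  | t, [] => some t
  | Term.pair a b, i :: p => subtermAt (if i then b else a) p
  | Term.enc a b, i :: p => subtermAt (if i then b else a) p
  | _, _ :: _ => none

/-- Positions of `t` at which the variable `x` occurs. -/
def posof (x : ℕ) (t : Term) : Set (List Bool) := {p | subtermAt t p = some (Term.var x)}

/-- Replace the subterms at every position in `P` by `r`. -/
noncomputable def replaceAt : Term → Set (List Bool) → Term → Term
  | Term.pair a b, P, r =>
      if [] ∈ P then r
      else Term.pair (replaceAt a {p | false :: p ∈ P} r) (replaceAt b {p | true :: p ∈ P} r)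
  | Term.enc a b, P, r =>
      if [] ∈ P then r
      else Term.enc (replaceAt a {p | false :: p ∈ P} r) (replaceAt b {p | true :: p ∈ P} r)
  | t, P, r => if [] ∈ P then r else t

/-- `Qpos t p`: the root position together with all positions `q ++ [i]` of `t`
where `q` is a proper prefix of `p`. -/
def Qpos (t : Term) (p : List Bool) : Set (List Bool) :=
  insert [] {q | q ∈ positions t ∧ ∃ q' i, q = q' ++ [i] ∧ q' <+: p ∧ q' ≠ p}

/-- Abstractable positions of `t` with respect to `S`. -/
def absPos (inv : Term → Term) (S : Set Term) (t : Term) : Set (List Bool) :=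
  {p | p ∈ positions t ∧ ∀ q ∈ Qpos t p, ∀ s, subtermAt t q = some s → dy inv S s}

/-! ## Assertions: `∃ bv. (l ⋈ r)` -/

structure Assertion : Type where
  bv : List ℕ
  l : Term
  r : Term
deriving DecidableEq

namespace Assertion

def bvSet (α : Assertion) : Set ℕ := {x | x ∈ α.bv}
def fv (α : Assertion) : Set ℕ := (α.l.tvars ∪ α.r.tvars) \ α.bvSet
def vars (α : Assertion) : Set ℕ := α.l.tvars ∪ α.r.tvars ∪ α.bvSet
def subterms (α : Assertion) : Set Term := α.l.subterms ∪ α.r.subterms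

end Assertion

def afvSet (A : Set Assertion) : Set ℕ := ⋃ β ∈ A, β.fv
def abvSet (A : Set Assertion) : Set ℕ := ⋃ β ∈ A, β.bvSet
def aVarsSet (A : Set Assertion) : Set ℕ := ⋃ β ∈ A, β.vars
def aSubtermsSet (A : Set Assertion) : Set Term := ⋃ β ∈ A, β.subterms

/-- The public terms of an assertion: maximal subterms containing no quantifiable
variable (`Vq` is the set of quantifiable variables). -/
def pubs (Vq : Set ℕ) (α : Assertion) : Set Term :=
  {t | t ∈ α.subterms ∧ t.tvars ∩ Vq = ∅ ∧
    ¬ ∃ u ∈ α.subterms, t ≠ u ∧ t ∈ u.subterms ∧ u.tvars ∩ Vq = ∅}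

/-- prepend an existential quantifier -/
def exA (x : ℕ) (α : Assertion) : Assertion := ⟨x :: α.bv, α.l, α.r⟩

/-- The `0^k` prefix of term positions of an assertion. -/
def prefixL (α : Assertion) : List Bool := List.replicate α.bv.length false

/-- Positions of an assertion at which the variable `x` occurs. -/
def aPosOf (x : ℕ) (α : Assertion) : Set (List Bool) :=
  (fun p => prefixL α ++ false :: p) '' posof x α.l ∪
  (fun p => prefixL α ++ true :: p) '' posof x α.r

/-- Replace the subterms at every (assertion) position in `P` by `r`. -/
noncomputable def aReplace (α : Assertion) (P : Set (List Bool)) (r : Term) : Assertion :=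
  ⟨α.bv,
   replaceAt α.l {p | (prefixL α ++ false :: p) ∈ P} r,
   replaceAt α.r {p | (prefixL α ++ true :: p) ∈ P} r⟩

/-- Abstractable positions of an assertion with respect to `S`. -/
def aAbs (inv : Term → Term) (S : Set Term) (α : Assertion) : Set (List Bool) :=
  (fun p => prefixL α ++ false :: p) '' absPos inv (S ∪ varTerms α.bvSet) α.l ∪
  (fun p => prefixL α ++ true :: p) '' absPos inv (S ∪ varTerms α.bvSet) α.r

/-! ## The assertion derivation system ⊢a -/

inductive adrv (inv : Term → Term) : Set Term → Set Assertion → Assertion → Prop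
  | ax {S A α} : α ∈ A → adrv inv S A α
  | eq {S A t} : dy inv S t → adrv inv S A ⟨[], t, t⟩
  | sym {S A t u} : adrv inv S A ⟨[], t, u⟩ → adrv inv S A ⟨[], u, t⟩
  | trans {S A t u v} : adrv inv S A ⟨[], t, u⟩ → adrv inv S A ⟨[], u, v⟩ →
      adrv inv S A ⟨[], t, v⟩
  | consPair {S A t0 t1 u0 u1} : adrv inv S A ⟨[], t0, u0⟩ → adrv inv S A ⟨[], t1, u1⟩ →
      adrv inv S A ⟨[], Term.pair t0 t1, Term.pair u0 u1⟩
  | consEnc {S A t0 t1 u0 u1} : adrv inv S A ⟨[], t0, u0⟩ → adrv inv S A ⟨[], t1, u1⟩ →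
      adrv inv S A ⟨[], Term.enc t0 t1, Term.enc u0 u1⟩
  | projPairFst {S A t0 t1 u0 u1} :
      adrv inv S A ⟨[], Term.pair t0 t1, Term.pair u0 u1⟩ →
      dy inv S t0 → dy inv S t1 → dy inv S u0 → dy inv S u1 → adrv inv S A ⟨[], t0, u0⟩
  | projPairSnd {S A t0 t1 u0 u1} :
      adrv inv S A ⟨[], Term.pair t0 t1, Term.pair u0 u1⟩ →
      dy inv S t0 → dy inv S t1 → dy inv S u0 → dy inv S u1 → adrv inv S A ⟨[], t1, u1⟩
  | projEncFst {S A t0 t1 u0 u1} :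
      adrv inv S A ⟨[], Term.enc t0 t1, Term.enc u0 u1⟩ →
      dy inv S t0 → dy inv S t1 → dy inv S u0 → dy inv S u1 → adrv inv S A ⟨[], t0, u0⟩
  | projEncSnd {S A t0 t1 u0 u1} :
      adrv inv S A ⟨[], Term.enc t0 t1, Term.enc u0 u1⟩ →
      dy inv S t0 → dy inv S t1 → dy inv S u0 → dy inv S u1 → adrv inv S A ⟨[], t1, u1⟩
  | exI {S A α x t} : adrv inv S A (aReplace α (aPosOf x α) t) → dy inv S t →
      aPosOf x α ⊆ aAbs inv (insert (Term.var x) S) α → adrv inv S A (exA x α)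
  | exE {S A α x γ} : adrv inv S A (exA x α) →
      adrv inv (insert (Term.var x) S) (insert α A) γ →
      x ∉ sVars S → x ∉ afvSet A → x ∉ γ.fv → adrv inv S A γ

/-- ⊢a without the ∃-elimination rule. -/
inductive adrvNX (inv : Term → Term) : Set Term → Set Assertion → Assertion → Prop
  | ax {S A α} : α ∈ A → adrvNX inv S A α
  | eq {S A t} : dy inv S t → adrvNX inv S A ⟨[], t, t⟩
  | sym {S A t u} : adrvNX inv S A ⟨[], t, u⟩ → adrvNX inv S A ⟨[], u, t⟩
  | trans {S A t u v} : adrvNX inv S A ⟨[], t, u⟩ → adrvNX inv S A ⟨[], u, v⟩ →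
      adrvNX inv S A ⟨[], t, v⟩
  | consPair {S A t0 t1 u0 u1} : adrvNX inv S A ⟨[], t0, u0⟩ → adrvNX inv S A ⟨[], t1, u1⟩ →
      adrvNX inv S A ⟨[], Term.pair t0 t1, Term.pair u0 u1⟩
  | consEnc {S A t0 t1 u0 u1} : adrvNX inv S A ⟨[], t0, u0⟩ → adrvNX inv S A ⟨[], t1, u1⟩ →
      adrvNX inv S A ⟨[], Term.enc t0 t1, Term.enc u0 u1⟩
  | projPairFst {S A t0 t1 u0 u1} :
      adrvNX inv S A ⟨[], Term.pair t0 t1, Term.pair u0 u1⟩ →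
      dy inv S t0 → dy inv S t1 → dy inv S u0 → dy inv S u1 → adrvNX inv S A ⟨[], t0, u0⟩
  | projPairSnd {S A t0 t1 u0 u1} :
      adrvNX inv S A ⟨[], Term.pair t0 t1, Term.pair u0 u1⟩ →
      dy inv S t0 → dy inv S t1 → dy inv S u0 → dy inv S u1 → adrvNX inv S A ⟨[], t1, u1⟩
  | projEncFst {S A t0 t1 u0 u1} :
      adrvNX inv S A ⟨[], Term.enc t0 t1, Term.enc u0 u1⟩ →
      dy inv S t0 → dy inv S t1 → dy inv S u0 → dy inv S u1 → adrvNX inv S A ⟨[], t0, u0⟩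
  | projEncSnd {S A t0 t1 u0 u1} :
      adrvNX inv S A ⟨[], Term.enc t0 t1, Term.enc u0 u1⟩ →
      dy inv S t0 → dy inv S t1 → dy inv S u0 → dy inv S u1 → adrvNX inv S A ⟨[], t1, u1⟩
  | exI {S A α x t} : adrvNX inv S A (aReplace α (aPosOf x α) t) → dy inv S t →
      aPosOf x α ⊆ aAbs inv (insert (Term.var x) S) α → adrvNX inv S A (exA x α)

/-- The equality fragment ⊢eq : derivability of equalities `t ⋈ u` from a set `T` of
terms and a set `E` of equalities, without the quantifier rules. -/
inductive eqdrv (inv : Term → Term) (T : Set Term) (E : Set (Term × Term)) :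
    Term → Term → Prop
  | ax {t u} : (t, u) ∈ E → eqdrv inv T E t u
  | eq {t} : dy inv T t → eqdrv inv T E t t
  | sym {t u} : eqdrv inv T E t u → eqdrv inv T E u t
  | trans {t u v} : eqdrv inv T E t u → eqdrv inv T E u v → eqdrv inv T E t v
  | consPair {t0 t1 u0 u1} : eqdrv inv T E t0 u0 → eqdrv inv T E t1 u1 →
      eqdrv inv T E (Term.pair t0 t1) (Term.pair u0 u1)
  | consEnc {t0 t1 u0 u1} : eqdrv inv T E t0 u0 → eqdrv inv T E t1 u1 →
      eqdrv inv T E (Term.enc t0 t1) (Term.enc u0 u1)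
  | projPairFst {t0 t1 u0 u1} : eqdrv inv T E (Term.pair t0 t1) (Term.pair u0 u1) →
      dy inv T t0 → dy inv T t1 → dy inv T u0 → dy inv T u1 → eqdrv inv T E t0 u0
  | projPairSnd {t0 t1 u0 u1} : eqdrv inv T E (Term.pair t0 t1) (Term.pair u0 u1) →
      dy inv T t0 → dy inv T t1 → dy inv T u0 → dy inv T u1 → eqdrv inv T E t1 u1
  | projEncFst {t0 t1 u0 u1} : eqdrv inv T E (Term.enc t0 t1) (Term.enc u0 u1) →
      dy inv T t0 → dy inv T t1 → dy inv T u0 → dy inv T u1 → eqdrv inv T E t0 u0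
  | projEncSnd {t0 t1 u0 u1} : eqdrv inv T E (Term.enc t0 t1) (Term.enc u0 u1) →
      dy inv T t0 → dy inv T t1 → dy inv T u0 → dy inv T u1 → eqdrv inv T E t1 u1

/-! ## Sanitized pairs, kernels, purity, consistency -/

/-- `(S;A)` is sanitized: free variables avoid `Vq`, bound variables are from `Vq`,
and the public terms of each assertion of `A` belong to `S`. -/
def sanitized (Vq : Set ℕ) (S : Set Term) (A : Set Assertion) : Prop :=
  ((sVars S ∪ afvSet A) ∩ Vq = ∅) ∧ (∀ β ∈ A, β.bvSet ⊆ Vq) ∧ (∀ β ∈ A, pubs Vq β ⊆ S)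

def kerT (S : Set Term) (A : Set Assertion) : Set Term := S ∪ varTerms (abvSet A)
def kerE (A : Set Assertion) : Set (Term × Term) := {e | ∃ β ∈ A, e = (β.l, β.r)}
def kerA (A : Set Assertion) : Set Assertion := {γ | ∃ β ∈ A, γ = Assertion.mk [] β.l β.r}

/-- The set of assertions corresponding to a set of equalities. -/
def EtoA (E : Set (Term × Term)) : Set Assertion := {γ | ∃ e ∈ E, γ = Assertion.mk [] e.1 e.2}

/-- `(T;E)` is pure if it is the kernel of some sanitized pair. -/
def isPure (Vq : Set ℕ) (T : Set Term) (E : Set (Term × Term)) : Prop :=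
  ∃ S A, sanitized Vq S A ∧ T = kerT S A ∧ E = kerE A

/-- `(T;E)` is consistent if some ground substitution unifies every equality in `E`. -/
def consistentE (E : Set (Term × Term)) : Prop :=
  ∃ lam : Subst, lam.isGround ∧ ∀ e ∈ E, lam.app e.1 = lam.app e.2

/-- `M`-bounded substitution: every image has at most `M` distinct subterms. -/
def boundedSub (M : ℕ) (μ : Subst) : Prop :=
  ∀ x ∈ μ.dom, (Term.subterms (μ x)).ncard ≤ M



/-! ## Dolev-Yao proof trees -/

inductive DPT : Type
  | ax (t : Term)
  | pair (p q : DPT)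
  | enc (p q : DPT)
  | fst (p : DPT)
  | snd (p : DPT)
  | dec (p q : DPT)

namespace DPT

/-- The conclusion of a DY proof tree, if it is well-formed. -/
def concl (inv : Term → Term) : DPT → Option Term
  | ax t => some t
  | pair p q =>
      match concl inv p, concl inv q with
      | some a, some b => some (Term.pair a b)
      | _, _ => none
  | enc p q =>
      match concl inv p, concl inv q with
      | some a, some b => some (Term.enc a b)
      | _, _ => none
  | fst p =>
      match concl inv p with
      | some (Term.pair a _) => some a
      | _ => none
  | snd p =>
      match concl inv p with
      | some (Term.pair _ b) => some b
      | _ => none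
  | dec p q =>
      match concl inv p, concl inv q with
      | some (Term.enc a k), some k' => if k' = inv k then some a else none
      | _, _ => none

/-- Validity of a DY proof tree from the set `X`. -/
def valid (inv : Term → Term) (X : Set Term) : DPT → Prop
  | ax t => t ∈ X
  | pair p q => valid inv X p ∧ valid inv X q
  | enc p q => valid inv X p ∧ valid inv X q
  | fst p => valid inv X p ∧ ∃ a b, concl inv p = some (Term.pair a b)
  | snd p => valid inv X p ∧ ∃ a b, concl inv p = some (Term.pair a b)
  | dec p q => valid inv X p ∧ valid inv X q ∧
      ∃ a k, concl inv p = some (Term.enc a k) ∧ concl inv q = some (inv k)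

def endsConstructor : DPT → Prop
  | pair _ _ => True
  | enc _ _ => True
  | _ => False

def endsDestructor : DPT → Prop
  | fst _ => True
  | snd _ => True
  | dec _ _ => True
  | _ => False

/-- Normal DY proofs: no constructor conclusion is the major premise of a destructor. -/
def normal : DPT → Prop
  | ax _ => True
  | pair p q => normal p ∧ normal q
  | enc p q => normal p ∧ normal q
  | fst p => normal p ∧ ¬ endsConstructor p
  | snd p => normal p ∧ ¬ endsConstructor p
  | dec p q => normal p ∧ normal q ∧ ¬ endsConstructor p

/-- All terms occurring in a DY proof tree (conclusions of subproofs). -/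
def termSet (inv : Term → Term) : DPT → Set Term
  | ax t => {t}
  | pair p q => {a | concl inv (pair p q) = some a} ∪ termSet inv p ∪ termSet inv q
  | enc p q => {a | concl inv (enc p q) = some a} ∪ termSet inv p ∪ termSet inv q
  | fst p => {a | concl inv (fst p) = some a} ∪ termSet inv p
  | snd p => {a | concl inv (snd p) = some a} ∪ termSet inv p
  | dec p q => {a | concl inv (dec p q) = some a} ∪ termSet inv p ∪ termSet inv q

/-- Typed DY proof w.r.t. a set `G`: every subproof ends in a constructor rule or
has its conclusion in `G`. -/
def typed (inv : Term → Term) (G : Set Term) : DPT → Prop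
  | ax t => t ∈ G
  | pair p q => typed inv G p ∧ typed inv G q
  | enc p q => typed inv G p ∧ typed inv G q
  | fst p => typed inv G p ∧ ∀ a, concl inv (fst p) = some a → a ∈ G
  | snd p => typed inv G p ∧ ∀ a, concl inv (snd p) = some a → a ∈ G
  | dec p q => typed inv G p ∧ typed inv G q ∧ ∀ a, concl inv (dec p q) = some a → a ∈ G

end DPT

/-! ## Equality proof trees (the system ⊢eq), with n-ary trans -/

inductive EPT : Type
  | ax (t u : Term)
  | eq (t : Term) (d : DPT)
  | sym (t u : Term) (p : EPT)
  | trans (t u : Term) (ps : List EPT)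
  | consPair (t0 u0 t1 u1 : Term) (p q : EPT)
  | consEnc (t0 u0 t1 u1 : Term) (p q : EPT)
  | projPairFst (t0 t1 u0 u1 : Term) (p : EPT)
  | projPairSnd (t0 t1 u0 u1 : Term) (p : EPT)
  | projEncFst (t0 t1 u0 u1 : Term) (p : EPT)
  | projEncSnd (t0 t1 u0 u1 : Term) (p : EPT)

namespace EPT

/-- The conclusion `t ⋈ u` of an equality proof tree. -/
def concl : EPT → Term × Term
  | ax t u => (t, u)
  | eq t _ => (t, t)
  | sym t u _ => (t, u)
  | trans t u _ => (t, u)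
  | consPair t0 u0 t1 u1 _ _ => (Term.pair t0 t1, Term.pair u0 u1)
  | consEnc t0 u0 t1 u1 _ _ => (Term.enc t0 t1, Term.enc u0 u1)
  | projPairFst t0 _ u0 _ _ => (t0, u0)
  | projPairSnd _ t1 _ u1 _ => (t1, u1)
  | projEncFst t0 _ u0 _ _ => (t0, u0)
  | projEncSnd _ t1 _ u1 _ => (t1, u1)

/-- Immediate subproof relation. -/
inductive Sub : EPT → EPT → Prop
  | sym {t u p} : Sub p (EPT.sym t u p)
  | trans {t u ps p} : p ∈ ps → Sub p (EPT.trans t u ps)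
  | consPairL {t0 u0 t1 u1 p q} : Sub p (EPT.consPair t0 u0 t1 u1 p q)
  | consPairR {t0 u0 t1 u1 p q} : Sub q (EPT.consPair t0 u0 t1 u1 p q)
  | consEncL {t0 u0 t1 u1 p q} : Sub p (EPT.consEnc t0 u0 t1 u1 p q)
  | consEncR {t0 u0 t1 u1 p q} : Sub q (EPT.consEnc t0 u0 t1 u1 p q)
  | projPairFst {t0 t1 u0 u1 p} : Sub p (EPT.projPairFst t0 t1 u0 u1 p)
  | projPairSnd {t0 t1 u0 u1 p} : Sub p (EPT.projPairSnd t0 t1 u0 u1 p)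
  | projEncFst {t0 t1 u0 u1 p} : Sub p (EPT.projEncFst t0 t1 u0 u1 p)
  | projEncSnd {t0 t1 u0 u1 p} : Sub p (EPT.projEncSnd t0 t1 u0 u1 p)

/-- `Subproof p q`: `p` is a (not necessarily proper) subproof of `q`. -/
def Subproof : EPT → EPT → Prop := Relation.ReflTransGen Sub

def isAx : EPT → Prop
  | ax _ _ => True
  | _ => False

def isTrans : EPT → Prop
  | trans _ _ _ => True
  | _ => False

def isCons : EPT → Prop
  | consPair _ _ _ _ _ _ => True
  | consEnc _ _ _ _ _ _ => True
  | _ => False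

def isProj : EPT → Prop
  | projPairFst _ _ _ _ _ => True
  | projPairSnd _ _ _ _ _ => True
  | projEncFst _ _ _ _ _ => True
  | projEncSnd _ _ _ _ _ => True
  | _ => False

/-- The ⊢eq proof contains an occurrence of the cons rule. -/
def containsCons (π : EPT) : Prop := ∃ π', Subproof π' π ∧ isCons π'

/-- Local validity of the last rule of an equality proof tree. -/
def localValid (inv : Term → Term) (T : Set Term) (E : Set (Term × Term)) : EPT → Prop
  | ax t u => (t, u) ∈ E
  | eq t d => DPT.valid inv T d ∧ DPT.concl inv d = some t
  | sym t u p => concl p = (u, t)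
  | trans t u ps =>
      ps ≠ [] ∧ (ps.head?.map fun p => (concl p).1) = some t ∧
      (ps.getLast?.map fun p => (concl p).2) = some u ∧
      List.Chain' (fun p q => (concl p).2 = (concl q).1) ps
  | consPair t0 u0 t1 u1 p q => concl p = (t0, u0) ∧ concl q = (t1, u1)
  | consEnc t0 u0 t1 u1 p q => concl p = (t0, u0) ∧ concl q = (t1, u1)
  | projPairFst t0 t1 u0 u1 p => concl p = (Term.pair t0 t1, Term.pair u0 u1) ∧
      dy inv T t0 ∧ dy inv T t1 ∧ dy inv T u0 ∧ dy inv T u1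
  | projPairSnd t0 t1 u0 u1 p => concl p = (Term.pair t0 t1, Term.pair u0 u1) ∧
      dy inv T t0 ∧ dy inv T t1 ∧ dy inv T u0 ∧ dy inv T u1
  | projEncFst t0 t1 u0 u1 p => concl p = (Term.enc t0 t1, Term.enc u0 u1) ∧
      dy inv T t0 ∧ dy inv T t1 ∧ dy inv T u0 ∧ dy inv T u1
  | projEncSnd t0 t1 u0 u1 p => concl p = (Term.enc t0 t1, Term.enc u0 u1) ∧
      dy inv T t0 ∧ dy inv T t1 ∧ dy inv T u0 ∧ dy inv T u1

/-- Validity of an equality proof tree from `(T;E)`. -/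
def valid (inv : Term → Term) (T : Set Term) (E : Set (Term × Term)) (π : EPT) : Prop :=
  ∀ π', Subproof π' π → localValid inv T E π'

/-- Local normality conditions for the last rule. -/
def localNormal : EPT → Prop
  | ax _ _ => True
  | eq _ d => DPT.normal d ∧ DPT.endsDestructor d
  | sym _ _ p => isAx p
  | trans _ _ ps =>
      (∀ p ∈ ps, ¬ isTrans p ∧ (concl p).1 ≠ (concl p).2) ∧
      List.Chain' (fun p q => ¬ (isCons p ∧ isCons q)) ps
  | consPair _ _ _ _ _ _ => True
  | consEnc _ _ _ _ _ _ => True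
  | projPairFst _ _ _ _ p => ¬ containsCons p
  | projPairSnd _ _ _ _ p => ¬ containsCons p
  | projEncFst _ _ _ _ p => ¬ containsCons p
  | projEncSnd _ _ _ _ p => ¬ containsCons p

/-- A normal ⊢eq proof. -/
def normalP (π : EPT) : Prop := ∀ π', Subproof π' π → localNormal π'

/-- The DY subproof attached to an `eq` node, if any. -/
def dSub : EPT → Option DPT
  | eq _ d => some d
  | _ => none

/-- All terms occurring in an ⊢eq proof: the terms of the conclusions of all
subproofs, including the DY subproofs. -/
def termSet (inv : Term → Term) (π : EPT) : Set Term :=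
  {a | ∃ π', Subproof π' π ∧
    (a = (concl π').1 ∨ a = (concl π').2 ∨
      ∃ d, dSub π' = some d ∧ a ∈ DPT.termSet inv d)}

/-- Typed ⊢eq proof w.r.t. a set `Typ` of typed terms: every subproof contains
cons, or proves a trivial equality, or has typed conclusion terms. -/
def typedP (Typ : Set Term) (π : EPT) : Prop :=
  ∀ π', Subproof π' π →
    containsCons π' ∨ (concl π').1 = (concl π').2 ∨
      ((concl π').1 ∈ Typ ∧ (concl π').2 ∈ Typ)

end EPT



/-! ## The fixed run setting -/

/-- A fixed run of a protocol: at step `i` (for `1 ≤ i ≤ n`) the honest agent `uᵢ`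
receives the assertion `β i` from the intruder and sends the assertion `α i`;
`(T i; E i)` and `(U i; F i)` are the kernels of the knowledge states of the
intruder and of `uᵢ`; `σ` is the ground substitution of the run, `μ i`/`θ i` the
witness substitutions, `ω` their composition, and `m` the spare name. -/
structure RunSetting : Type where
  inv : Term → Term
  Vq : Set ℕ
  n : ℕ
  β : ℕ → Assertion
  α : ℕ → Assertion
  T : ℕ → Set Term
  E : ℕ → Set (Term × Term)
  U : ℕ → Set Term
  F : ℕ → Set (Term × Term)
  σ : Subst
  μ : ℕ → Subst
  θ : ℕ → Subst
  ω : Subst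
  m : ℕ
  -- well-formedness of the communicated assertions
  hβbv : ∀ i, 1 ≤ i → i ≤ n → (β i).bvSet ⊆ Vq
  hαbv : ∀ i, 1 ≤ i → i ≤ n → (α i).bvSet ⊆ Vq
  hβfv : ∀ i, 1 ≤ i → i ≤ n → (β i).fv ∩ Vq = ∅
  hαfv : ∀ i, 1 ≤ i → i ≤ n → (α i).fv ∩ Vq = ∅
  -- σ is ground, defined on the intruder variables of the run, and fixes Vq
  hσVq : ∀ x ∈ Vq, σ x = Term.var x
  hσground : ∀ x ∈ σ.dom, (σ x).ground
  -- evolution of the kernels of the intruder's knowledge state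
  hT0 : ∀ t ∈ T 0, t.ground
  hE0 : E 0 = ∅
  hTmono : ∀ i, T i ⊆ T (i + 1)
  hEmono : ∀ i, E i ⊆ E (i + 1)
  hTstep : ∀ i, 1 ≤ i → i ≤ n →
    T i = T (i - 1) ∪ pubs Vq (α i) ∪ varTerms (α i).bvSet
  hEstep : ∀ i, 1 ≤ i → i ≤ n → E i = E (i - 1) ∪ {((α i).l, (α i).r)}
  -- knowledge states are finite
  hTfin : ∀ i, i ≤ n → (T i).Finite
  hEfin : ∀ i, i ≤ n → (E i).Finite
  hUfin : ∀ i, i ≤ n → (U i).Finite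
  hFfin : ∀ i, i ≤ n → (F i).Finite
  -- provenance of honest agents' kernels
  hUmem : ∀ i, 1 ≤ i → i ≤ n → ∀ t ∈ U i,
    (∃ x ∈ Vq, t = Term.var x) ∨ t.tvars ⊆ σ.dom
  hFmem : ∀ i, 1 ≤ i → i ≤ n → ∀ e ∈ F i,
    ∃ j, 1 ≤ j ∧ j ≤ i ∧ e = ((β j).l, (β j).r)
  -- variables sent by honest agents were received earlier (Observation 2 of the paper)
  hfvEarlier : ∀ i, 1 ≤ i → i ≤ n → ∀ x ∈ (α i).fv,
    ∃ j, 1 ≤ j ∧ j ≤ i ∧ x ∈ (β j).fv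
  -- witness substitutions and the derivability conditions of the run
  hμdom : ∀ i, 1 ≤ i → i ≤ n → (μ i).dom ⊆ (β i).bvSet
  hθdom : ∀ i, 1 ≤ i → i ≤ n → (θ i).dom ⊆ (α i).bvSet
  hμdy : ∀ i, 1 ≤ i → i ≤ n → ∀ x ∈ (μ i).dom,
    dy inv (Subst.app σ '' T (i - 1)) (μ i x)
  hμeq : ∀ i, 1 ≤ i → i ≤ n →
    eqdrv inv (Subst.app σ '' T (i - 1)) (pairImg σ (E (i - 1)))
      (σ.app ((μ i).app (β i).l)) (σ.app ((μ i).app (β i).r))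
  hθdy : ∀ i, 1 ≤ i → i ≤ n → ∀ x ∈ (θ i).dom,
    dy inv (Subst.app σ '' U i) (θ i x)
  hθeq : ∀ i, 1 ≤ i → i ≤ n →
    eqdrv inv (Subst.app σ '' U i) (pairImg σ (F i))
      (σ.app ((θ i).app (α i).l)) (σ.app ((θ i).app (α i).r))
  -- ω is the composition σμ₁θ₁…μₙθₙ
  hωσ : ∀ x, ω.app (σ x) = ω x
  hωμ : ∀ i, 1 ≤ i → i ≤ n → ∀ x, ω.app ((μ i) x) = ω x
  hωθ : ∀ i, 1 ≤ i → i ≤ n → ∀ x, ω.app ((θ i) x) = ω x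
  hωground : ∀ x ∈ ω.dom, (ω x).ground
  hωT : ∀ i, i ≤ n → ∀ t ∈ T i ∪ U i, (ω.app t).ground
  hωE : ∀ i, i ≤ n → ∀ e ∈ E i ∪ F i, (ω.app e.1).ground ∧ (ω.app e.2).ground
  -- the spare name m
  hm : Term.name m ∈ T 0
  hmβ : ∀ i, 1 ≤ i → i ≤ n →
    Term.name m ∉ (β i).subterms ∪ (α i).subterms
  hmμ : ∀ i, 1 ≤ i → i ≤ n → ∀ x ∈ (μ i).dom, Term.name m ∉ (μ i x).subterms
  hmθ : ∀ i, 1 ≤ i → i ≤ n → ∀ x ∈ (θ i).dom, Term.name m ∉ (θ i x).subterms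

namespace RunSetting

variable (R : RunSetting)

/-- The public terms of the `i`-th intruder send. -/
def IT (i : ℕ) : Set Term := pubs R.Vq (R.β i)

/-- The public terms of the `i`-th honest agent send. -/
def HT (i : ℕ) : Set Term := pubs R.Vq (R.α i)

/-- The type set 𝒞 of the run. -/
def C : Set Term :=
  ⋃ i ∈ Set.Iic R.n, (sSubterms (R.T i ∪ R.U i) ∪ pairSubterms (R.E i ∪ R.F i))

/-- The type set 𝒟 = 𝒞 ∖ 𝒱 of the run. -/
def D : Set Term := R.C \ Set.range Term.var

/-- A variable is minimal if its ω-image coincides with the ω-image of no term of 𝒟. -/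
def minimal (x : ℕ) : Prop := x ∈ R.ω.dom ∧ ¬ ∃ t ∈ R.D, R.ω.app t = R.ω x

/-- A term is zappable if it ω-unifies with some minimal variable. -/
def zappable (t : Term) : Prop := ∃ x, R.minimal x ∧ R.ω.app t = R.ω x

/-- The zap of a term: zappable terms get replaced by the spare name `m`. -/
noncomputable def zap : Term → Term
  | Term.var x => Term.var x
  | Term.name k => if R.zappable (Term.name k) then Term.name R.m else Term.name k
  | Term.pair a b =>
      if R.zappable (Term.pair a b) then Term.name R.m
      else Term.pair (zap a) (zap b)
  | Term.enc a b =>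
      if R.zappable (Term.enc a b) then Term.name R.m
      else Term.enc (zap a) (zap b)

/-- The small substitution λ* corresponding to λ. -/
noncomputable def star (lam : Subst) : Subst := fun x => R.zap (lam x)

/-- The set of typed terms: σ(𝒟) ∪ ω(𝒞) ∪ 𝒱_q. -/
def typedSet : Set Term :=
  Subst.app R.σ '' R.D ∪ Subst.app R.ω '' R.C ∪ varTerms R.Vq

/-- A typed term. -/
def typedTerm (t : Term) : Prop := t ∈ R.typedSet

end RunSetting



-- BEGIN AUX
section AuxBasic

open Term

/-- term size -/
def tsize : Term → ℕ
  | Term.name _ => 1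
  | Term.var _ => 1
  | Term.pair a b => tsize a + tsize b + 1
  | Term.enc a b => tsize a + tsize b + 1

lemma st_self (t : Term) : t ∈ t.subterms := by
  cases t <;> simp [Term.subterms]

lemma st_trans {s u t : Term} (hu : u ∈ t.subterms) (hs : s ∈ u.subterms) :
    s ∈ t.subterms := by
  induction t with
  | name n => simp [Term.subterms] at hu; subst hu; exact hs
  | var x => simp [Term.subterms] at hu; subst hu; exact hs
  | pair a b iha ihb =>
      simp [Term.subterms] at hu ⊢
      rcases hu with h | h | h
      · subst h; simpa [Term.subterms] using hs
      · exact Or.inr (Or.inl (iha h))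
      · exact Or.inr (Or.inr (ihb h))
  | enc a b iha ihb =>
      simp [Term.subterms] at hu ⊢
      rcases hu with h | h | h
      · subst h; simpa [Term.subterms] using hs
      · exact Or.inr (Or.inl (iha h))
      · exact Or.inr (Or.inr (ihb h))

lemma st_size {s t : Term} (h : s ∈ t.subterms) : tsize s ≤ tsize t := by
  induction t with
  | name n => simp [Term.subterms] at h; subst h; rfl
  | var x => simp [Term.subterms] at h; subst h; rfl
  | pair a b iha ihb =>
      simp [Term.subterms] at h
      rcases h with h | h | h
      · subst h; rfl
      · exact le_trans (iha h) (by simp [tsize]; omega)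
      · exact le_trans (ihb h) (by simp [tsize]; omega)
  | enc a b iha ihb =>
      simp [Term.subterms] at h
      rcases h with h | h | h
      · subst h; rfl
      · exact le_trans (iha h) (by simp [tsize]; omega)
      · exact le_trans (ihb h) (by simp [tsize]; omega)

lemma tvars_mono_st {u t : Term} (h : u ∈ t.subterms) : u.tvars ⊆ t.tvars := by
  induction t with
  | name n => simp [Term.subterms] at h; subst h; exact subset_rfl
  | var x => simp [Term.subterms] at h; subst h; exact subset_rfl
  | pair a b iha ihb =>
      simp [Term.subterms] at h
      rcases h with h | h | h
      · subst h; exact subset_rfl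
      · exact subset_trans (iha h) (by simp [Term.tvars])
      · exact subset_trans (ihb h) (by simp [Term.tvars])
  | enc a b iha ihb =>
      simp [Term.subterms] at h
      rcases h with h | h | h
      · subst h; exact subset_rfl
      · exact subset_trans (iha h) (by simp [Term.tvars])
      · exact subset_trans (ihb h) (by simp [Term.tvars])

lemma ground_st {s t : Term} (hg : t.ground) (h : s ∈ t.subterms) : s.ground := by
  have := tvars_mono_st h
  rw [Term.ground] at *
  exact Set.eq_empty_of_subset_empty (hg ▸ this)

/-- variables of images -/
lemma tvars_app {σ' : Subst} {t : Term} {v : ℕ} :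
    v ∈ (σ'.app t).tvars ↔ ∃ y ∈ t.tvars, v ∈ (σ' y).tvars := by
  induction t with
  | name n => simp [Subst.app, Term.tvars]
  | var x => simp [Subst.app, Term.tvars]
  | pair a b iha ihb =>
      simp [Subst.app, Term.tvars, iha, ihb]
      constructor
      · rintro (⟨y, hy, hv⟩ | ⟨y, hy, hv⟩) <;> exact ⟨y, by tauto, hv⟩
      · rintro ⟨y, hy | hy, hv⟩
        · exact Or.inl ⟨y, hy, hv⟩
        · exact Or.inr ⟨y, hy, hv⟩
  | enc a b iha ihb =>
      simp [Subst.app, Term.tvars, iha, ihb]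
      constructor
      · rintro (⟨y, hy, hv⟩ | ⟨y, hy, hv⟩) <;> exact ⟨y, by tauto, hv⟩
      · rintro ⟨y, hy | hy, hv⟩
        · exact Or.inl ⟨y, hy, hv⟩
        · exact Or.inr ⟨y, hy, hv⟩

lemma ground_app {σ' : Subst} {t : Term} (h : ∀ y ∈ t.tvars, (σ' y).ground) :
    (σ'.app t).ground := by
  rw [Term.ground, Set.eq_empty_iff_forall_notMem]
  intro v hv
  rcases tvars_app.1 hv with ⟨y, hy, hvy⟩
  have := h y hy
  rw [Term.ground, Set.eq_empty_iff_forall_notMem] at this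
  exact this v hvy

/-- subterms of an image -/
lemma st_app {σ' : Subst} {t s : Term} (h : s ∈ (σ'.app t).subterms) :
    (∃ u ∈ t.subterms, (∀ v, u ≠ Term.var v) ∧ s = σ'.app u) ∨
    (∃ y ∈ t.tvars, s ∈ (σ' y).subterms) := by
  induction t with
  | name n =>
      simp [Subst.app, Term.subterms] at h
      exact Or.inl ⟨Term.name n, st_self _, by simp, by simp [h, Subst.app]⟩
  | var x =>
      exact Or.inr ⟨x, by simp [Term.tvars], by simpa [Subst.app] using h⟩
  | pair a b iha ihb =>
      simp only [Subst.app, Term.subterms, Set.mem_insert_iff, Set.mem_union] at h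
      rcases h with h | h | h
      · exact Or.inl ⟨Term.pair a b, st_self _, by simp, by simp [h, Subst.app]⟩
      · rcases iha h with ⟨u, hu, hnv, hs⟩ | ⟨y, hy, hs⟩
        · exact Or.inl ⟨u, st_trans (by simp [Term.subterms, st_self]) hu, hnv, hs⟩
        · exact Or.inr ⟨y, by simp [Term.tvars]; exact Or.inl hy, hs⟩
      · rcases ihb h with ⟨u, hu, hnv, hs⟩ | ⟨y, hy, hs⟩
        · exact Or.inl ⟨u, st_trans (by simp [Term.subterms, st_self]) hu, hnv, hs⟩
        · exact Or.inr ⟨y, by simp [Term.tvars]; exact Or.inr hy, hs⟩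
  | enc a b iha ihb =>
      simp only [Subst.app, Term.subterms, Set.mem_insert_iff, Set.mem_union] at h
      rcases h with h | h | h
      · exact Or.inl ⟨Term.enc a b, st_self _, by simp, by simp [h, Subst.app]⟩
      · rcases iha h with ⟨u, hu, hnv, hs⟩ | ⟨y, hy, hs⟩
        · exact Or.inl ⟨u, st_trans (by simp [Term.subterms, st_self]) hu, hnv, hs⟩
        · exact Or.inr ⟨y, by simp [Term.tvars]; exact Or.inl hy, hs⟩
      · rcases ihb h with ⟨u, hu, hnv, hs⟩ | ⟨y, hy, hs⟩
        · exact Or.inl ⟨u, st_trans (by simp [Term.subterms, st_self]) hu, hnv, hs⟩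
        · exact Or.inr ⟨y, by simp [Term.tvars]; exact Or.inr hy, hs⟩

lemma st_app_mono {σ' : Subst} {s t : Term} (h : s ∈ t.subterms) :
    σ'.app s ∈ (σ'.app t).subterms := by
  induction t with
  | name n => simp [Term.subterms] at h; subst h; simp [Subst.app, Term.subterms]
  | var x => simp [Term.subterms] at h; subst h; exact st_self _
  | pair a b iha ihb =>
      simp [Term.subterms] at h
      rcases h with h | h | h
      · subst h; exact st_self _
      · exact st_trans (by simp [Subst.app, Term.subterms, st_self]) (iha h)
      · exact st_trans (by simp [Subst.app, Term.subterms, st_self]) (ihb h)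
  | enc a b iha ihb =>
      simp [Term.subterms] at h
      rcases h with h | h | h
      · subst h; exact st_self _
      · exact st_trans (by simp [Subst.app, Term.subterms, st_self]) (iha h)
      · exact st_trans (by simp [Subst.app, Term.subterms, st_self]) (ihb h)

lemma mem_st_app_of_var {σ' : Subst} {t : Term} {x : ℕ} (h : x ∈ t.tvars) :
    σ' x ∈ (σ'.app t).subterms := by
  induction t with
  | name n => simp [Term.tvars] at h
  | var y => simp [Term.tvars] at h; subst h; simp [Subst.app]; exact st_self _
  | pair a b iha ihb =>
      simp [Term.tvars] at h
      rcases h with h | h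
      · exact st_trans (by simp [Subst.app, Term.subterms, st_self]) (iha h)
      · exact st_trans (by simp [Subst.app, Term.subterms, st_self]) (ihb h)
  | enc a b iha ihb =>
      simp [Term.tvars] at h
      rcases h with h | h
      · exact st_trans (by simp [Subst.app, Term.subterms, st_self]) (iha h)
      · exact st_trans (by simp [Subst.app, Term.subterms, st_self]) (ihb h)

lemma tvars_app_of_var {μ' : Subst} {t : Term} {x : ℕ} (h : x ∈ t.tvars)
    (hx : μ' x = Term.var x) : x ∈ (μ'.app t).tvars := by
  have := mem_st_app_of_var (σ' := μ') h
  rw [hx] at this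
  have := tvars_mono_st this
  exact this (by simp [Term.tvars])

lemma st_app_size_lt {σ' : Subst} {s t : Term} (h : s ∈ t.subterms) (hne : s ≠ t) :
    tsize (σ'.app s) < tsize (σ'.app t) := by
  induction t with
  | name n => simp [Term.subterms] at h; exact absurd h hne
  | var x => simp [Term.subterms] at h; exact absurd h hne
  | pair a b iha ihb =>
      simp [Term.subterms] at h
      rcases h with h | h | h
      · exact absurd h hne
      · calc tsize (σ'.app s) ≤ tsize (σ'.app a) := st_size (st_app_mono h)
          _ < _ := by simp [Subst.app, tsize]
      · calc tsize (σ'.app s) ≤ tsize (σ'.app b) := st_size (st_app_mono h)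
          _ < _ := by simp [Subst.app, tsize]
  | enc a b iha ihb =>
      simp [Term.subterms] at h
      rcases h with h | h | h
      · exact absurd h hne
      · calc tsize (σ'.app s) ≤ tsize (σ'.app a) := st_size (st_app_mono h)
          _ < _ := by simp [Subst.app, tsize]
      · calc tsize (σ'.app s) ≤ tsize (σ'.app b) := st_size (st_app_mono h)
          _ < _ := by simp [Subst.app, tsize]

/-- absorption: if ω absorbs τ pointwise then on all terms -/
lemma absorb {ω' τ : Subst} (h : ∀ x, ω'.app (τ x) = ω' x) (t : Term) :
    ω'.app (τ.app t) = ω'.app t := by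
  induction t with
  | name n => simp [Subst.app]
  | var x => simp [Subst.app, h]
  | pair a b iha ihb => simp [Subst.app, iha, ihb]
  | enc a b iha ihb => simp [Subst.app, iha, ihb]

end AuxBasic

section AuxDy

variable {inv : Term → Term}

def stX (X : Set Term) : Set Term := ⋃ w ∈ X, w.subterms

lemma stX_closed {X : Set Term} {s s' : Term} (h : s ∈ stX X) (h' : s' ∈ s.subterms) :
    s' ∈ stX X := by
  simp only [stX, Set.mem_iUnion] at h ⊢
  rcases h with ⟨w, hw, hs⟩
  exact ⟨w, hw, st_trans hs h'⟩

lemma mem_stX {X : Set Term} {t : Term} (h : t ∈ X) : t ∈ stX X := by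
  simp only [stX, Set.mem_iUnion]; exact ⟨t, h, st_self t⟩

lemma dy_mono {X X' : Set Term} (hXX : X ⊆ X') {t : Term} (h : dy inv X t) :
    dy inv X' t := by
  induction h with
  | ax h => exact dy.ax (hXX h)
  | pair _ _ iha ihb => exact dy.pair iha ihb
  | enc _ _ iha ihb => exact dy.enc iha ihb
  | fst _ ih => exact dy.fst ih
  | snd _ ih => exact dy.snd ih
  | dec _ _ iha ihb => exact dy.dec iha ihb

lemma dy_tvars {X : Set Term} {t : Term} (h : dy inv X t) :
    t.tvars ⊆ ⋃ w ∈ X, w.tvars := by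
  induction h with
  | ax h => exact fun v hv => Set.mem_biUnion h hv
  | pair _ _ iha ihb => intro v hv; simp [Term.tvars] at hv; rcases hv with hv | hv
                        exacts [iha hv, ihb hv]
  | enc _ _ iha ihb => intro v hv; simp [Term.tvars] at hv; rcases hv with hv | hv
                       exacts [iha hv, ihb hv]
  | fst _ ih => exact fun v hv => ih (by simp [Term.tvars]; exact Or.inl hv)
  | snd _ ih => exact fun v hv => ih (by simp [Term.tvars]; exact Or.inr hv)
  | dec _ _ iha _ => exact fun v hv => iha (by simp [Term.tvars]; exact Or.inl hv)

end AuxDy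

namespace DPT

variable {inv : Term → Term}

lemma valid_mono {X X' : Set Term} (hXX : X ⊆ X') :
    ∀ {d : DPT}, valid inv X d → valid inv X' d := by
  intro d
  induction d with
  | ax t => exact fun h => hXX h
  | pair p q ihp ihq => exact fun h => ⟨ihp h.1, ihq h.2⟩
  | enc p q ihp ihq => exact fun h => ⟨ihp h.1, ihq h.2⟩
  | fst p ihp => exact fun h => ⟨ihp h.1, h.2⟩
  | snd p ihp => exact fun h => ⟨ihp h.1, h.2⟩
  | dec p q ihp ihq => exact fun h => ⟨ihp h.1, ihq h.2.1, h.2.2⟩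

/-- validity implies derivability of the conclusion -/
lemma valid_dy {X : Set Term} :
    ∀ {d : DPT}, valid inv X d → ∀ {m : Term}, concl inv d = some m → dy inv X m := by
  intro d
  induction d with
  | ax t =>
      intro h m hm
      simp [concl] at hm; subst hm; exact dy.ax h
  | pair p q ihp ihq =>
      intro h m hm
      rcases h with ⟨hp, hq⟩
      rcases hcp : concl inv p with _ | a
      · rw [concl, hcp] at hm; simp at hm
      rcases hcq : concl inv q with _ | b
      · rw [concl, hcp, hcq] at hm; simp at hm
      rw [concl, hcp, hcq] at hm
      simp at hm; subst hm
      exact dy.pair (ihp hp hcp) (ihq hq hcq)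
  | enc p q ihp ihq =>
      intro h m hm
      rcases h with ⟨hp, hq⟩
      rcases hcp : concl inv p with _ | a
      · rw [concl, hcp] at hm; simp at hm
      rcases hcq : concl inv q with _ | b
      · rw [concl, hcp, hcq] at hm; simp at hm
      rw [concl, hcp, hcq] at hm
      simp at hm; subst hm
      exact dy.enc (ihp hp hcp) (ihq hq hcq)
  | fst p ihp =>
      intro h m hm
      rcases h with ⟨hp, a, b, hab⟩
      rw [concl, hab] at hm; simp at hm; subst hm
      exact dy.fst (ihp hp hab)
  | snd p ihp =>
      intro h m hm
      rcases h with ⟨hp, a, b, hab⟩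
      rw [concl, hab] at hm; simp at hm; subst hm
      exact dy.snd (ihp hp hab)
  | dec p q ihp ihq =>
      intro h m hm
      rcases h with ⟨hp, hq, a, k, hak, hk⟩
      rw [concl, hak, hk] at hm; simp at hm; subst hm
      exact dy.dec (ihp hp hak) (ihq hq hk)

lemma pair_concl_inv {p q : DPT} {m : Term} (h : concl inv (DPT.pair p q) = some m) :
    ∃ a b, m = Term.pair a b ∧ concl inv p = some a ∧ concl inv q = some b := by
  rcases hcp : concl inv p with _ | a
  · rw [concl, hcp] at h; simp at h
  rcases hcq : concl inv q with _ | b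
  · rw [concl, hcp, hcq] at h; simp at h
  rw [concl, hcp, hcq] at h; simp at h
  exact ⟨a, b, h.symm, rfl, rfl⟩

lemma enc_concl_inv {p q : DPT} {m : Term} (h : concl inv (DPT.enc p q) = some m) :
    ∃ a b, m = Term.enc a b ∧ concl inv p = some a ∧ concl inv q = some b := by
  rcases hcp : concl inv p with _ | a
  · rw [concl, hcp] at h; simp at h
  rcases hcq : concl inv q with _ | b
  · rw [concl, hcp, hcq] at h; simp at h
  rw [concl, hcp, hcq] at h; simp at h
  exact ⟨a, b, h.symm, rfl, rfl⟩

/-- a proof ending in a constructor with a pair conclusion is a pair node -/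
lemma endsCons_pair {d : DPT} {a b : Term} (hc : endsConstructor d)
    (h : concl inv d = some (Term.pair a b)) :
    ∃ q1 q2, d = DPT.pair q1 q2 ∧ concl inv q1 = some a ∧ concl inv q2 = some b := by
  cases d with
  | pair q1 q2 =>
      rcases pair_concl_inv h with ⟨a', b', hab, h1, h2⟩
      cases hab
      exact ⟨q1, q2, rfl, h1, h2⟩
  | enc q1 q2 =>
      rcases enc_concl_inv h with ⟨a', b', hab, _, _⟩
      simp at hab
  | ax t => exact absurd hc (by simp [endsConstructor])
  | fst p => exact absurd hc (by simp [endsConstructor])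
  | snd p => exact absurd hc (by simp [endsConstructor])
  | dec p q => exact absurd hc (by simp [endsConstructor])

lemma endsCons_enc {d : DPT} {a b : Term} (hc : endsConstructor d)
    (h : concl inv d = some (Term.enc a b)) :
    ∃ q1 q2, d = DPT.enc q1 q2 ∧ concl inv q1 = some a ∧ concl inv q2 = some b := by
  cases d with
  | enc q1 q2 =>
      rcases enc_concl_inv h with ⟨a', b', hab, h1, h2⟩
      cases hab
      exact ⟨q1, q2, rfl, h1, h2⟩
  | pair q1 q2 =>
      rcases pair_concl_inv h with ⟨a', b', hab, _, _⟩
      simp at hab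
  | ax t => exact absurd hc (by simp [endsConstructor])
  | fst p => exact absurd hc (by simp [endsConstructor])
  | snd p => exact absurd hc (by simp [endsConstructor])
  | dec p q => exact absurd hc (by simp [endsConstructor])

/-- normalization (L1) -/
lemma normalize {X : Set Term} {t : Term} (h : dy inv X t) :
    ∃ d, valid inv X d ∧ concl inv d = some t ∧ normal d := by
  induction h with
  | ax h => exact ⟨DPT.ax _, h, rfl, trivial⟩
  | pair _ _ iha ihb =>
      rcases iha with ⟨d1, hv1, hc1, hn1⟩
      rcases ihb with ⟨d2, hv2, hc2, hn2⟩
      exact ⟨DPT.pair d1 d2, ⟨hv1, hv2⟩, by rw [concl, hc1, hc2], hn1, hn2⟩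
  | enc _ _ iha ihb =>
      rcases iha with ⟨d1, hv1, hc1, hn1⟩
      rcases ihb with ⟨d2, hv2, hc2, hn2⟩
      exact ⟨DPT.enc d1 d2, ⟨hv1, hv2⟩, by rw [concl, hc1, hc2], hn1, hn2⟩
  | @fst t u _ ih =>
      rcases ih with ⟨d, hv, hc, hn⟩
      by_cases hec : endsConstructor d
      · rcases endsCons_pair hec hc with ⟨q1, q2, rfl, h1, h2⟩
        exact ⟨q1, hv.1, h1, hn.1⟩
      · exact ⟨DPT.fst d, ⟨hv, t, u, hc⟩, by rw [concl, hc], hn, hec⟩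
  | @snd t u _ ih =>
      rcases ih with ⟨d, hv, hc, hn⟩
      by_cases hec : endsConstructor d
      · rcases endsCons_pair hec hc with ⟨q1, q2, rfl, h1, h2⟩
        exact ⟨q2, hv.2, h2, hn.2⟩
      · exact ⟨DPT.snd d, ⟨hv, t, u, hc⟩, by rw [concl, hc], hn, hec⟩
  | @dec t k _ _ iha ihb =>
      rcases iha with ⟨d, hv, hc, hn⟩
      rcases ihb with ⟨e, hve, hce, hne⟩
      by_cases hec : endsConstructor d
      · rcases endsCons_enc hec hc with ⟨q1, q2, rfl, h1, h2⟩
        exact ⟨q1, hv.1, h1, hn.1⟩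
      · refine ⟨DPT.dec d e, ⟨hv, hve, t, k, hc, hce⟩, ?_, hn, hne, hec⟩
        rw [concl, hc, hce]; simp

/-- subterm property for normal proofs (L2) -/
lemma normal_subterm {X : Set Term} :
    ∀ {d : DPT}, valid inv X d → normal d → ¬ endsConstructor d →
      ∀ {m : Term}, concl inv d = some m → m ∈ stX X := by
  intro d
  induction d with
  | ax t =>
      intro hv _ _ m hm
      simp [concl] at hm; subst hm; exact mem_stX hv
  | pair p q _ _ => intro _ _ hec _ _; exact absurd trivial hec
  | enc p q _ _ => intro _ _ hec _ _; exact absurd trivial hec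
  | fst p ihp =>
      intro hv hn _ m hm
      rcases hv with ⟨hp, a, b, hab⟩
      rw [concl, hab] at hm; simp at hm; subst hm
      have := ihp hp hn.1 hn.2 hab
      exact stX_closed this (by simp [Term.subterms, st_self])
  | snd p ihp =>
      intro hv hn _ m hm
      rcases hv with ⟨hp, a, b, hab⟩
      rw [concl, hab] at hm; simp at hm; subst hm
      have := ihp hp hn.1 hn.2 hab
      exact stX_closed this (by simp [Term.subterms, st_self])
  | dec p q ihp ihq =>
      intro hv hn _ m hm
      rcases hv with ⟨hp, hq, a, k, hak, hk⟩
      rw [concl, hak, hk] at hm; simp at hm; subst hm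
      have := ihp hp hn.1 hn.2.2 hak
      exact stX_closed this (by simp [Term.subterms, st_self])

/-- a typed proof not ending in a constructor has conclusion in G -/
lemma typed_concl {G : Set Term} :
    ∀ {d : DPT}, typed inv G d → ¬ endsConstructor d →
      ∀ {m : Term}, concl inv d = some m → m ∈ G := by
  intro d
  cases d with
  | ax t => intro ht _ m hm; simp [concl] at hm; subst hm; exact ht
  | pair p q => intro _ hec; exact absurd trivial hec
  | enc p q => intro _ hec; exact absurd trivial hec
  | fst p => intro ht _ m hm; exact ht.2 m hm
  | snd p => intro ht _ m hm; exact ht.2 m hm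
  | dec p q => intro ht _ m hm; exact ht.2.2 m hm

end DPT

section AuxEq

variable {inv : Term → Term}

/-- soundness of ⊢eq under a unifier of E -/
lemma eqdrv_sound {T : Set Term} {E : Set (Term × Term)} {ω' : Subst}
    (hE : ∀ e ∈ E, ω'.app e.1 = ω'.app e.2) :
    ∀ {a b : Term}, eqdrv inv T E a b → ω'.app a = ω'.app b := by
  intro a b h
  induction h with
  | ax h => exact hE _ h
  | eq _ => rfl
  | sym _ ih => exact ih.symm
  | trans _ _ ih1 ih2 => exact ih1.trans ih2
  | consPair _ _ ih1 ih2 => simp [Subst.app, ih1, ih2]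
  | consEnc _ _ ih1 ih2 => simp [Subst.app, ih1, ih2]
  | projPairFst _ _ _ _ _ ih => simp [Subst.app] at ih; exact ih.1
  | projPairSnd _ _ _ _ _ ih => simp [Subst.app] at ih; exact ih.2
  | projEncFst _ _ _ _ _ ih => simp [Subst.app] at ih; exact ih.1
  | projEncSnd _ _ _ _ _ ih => simp [Subst.app] at ih; exact ih.2

/-- surface terms of derivable equalities -/
inductive ESurf (inv : Term → Term) (T : Set Term) (E : Set (Term × Term)) : Term → Prop
  | dy {t} : dy inv T t → ESurf inv T E t
  | side {t} (e : Term × Term) : e ∈ E → (t = e.1 ∨ t = e.2) → ESurf inv T E t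
  | pr {a b} : ESurf inv T E a → ESurf inv T E b → ESurf inv T E (Term.pair a b)
  | en {a b} : ESurf inv T E a → ESurf inv T E b → ESurf inv T E (Term.enc a b)

lemma eqdrv_esurf {T : Set Term} {E : Set (Term × Term)} {a b : Term}
    (h : eqdrv inv T E a b) : ESurf inv T E a ∧ ESurf inv T E b := by
  induction h with
  | @ax t u h => exact ⟨ESurf.side (t, u) h (Or.inl rfl), ESurf.side (t, u) h (Or.inr rfl)⟩
  | eq h => exact ⟨ESurf.dy h, ESurf.dy h⟩
  | sym _ ih => exact ⟨ih.2, ih.1⟩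
  | trans _ _ ih1 ih2 => exact ⟨ih1.1, ih2.2⟩
  | consPair _ _ ih1 ih2 => exact ⟨ESurf.pr ih1.1 ih2.1, ESurf.pr ih1.2 ih2.2⟩
  | consEnc _ _ ih1 ih2 => exact ⟨ESurf.en ih1.1 ih2.1, ESurf.en ih1.2 ih2.2⟩
  | projPairFst _ h1 h2 h3 h4 _ => exact ⟨ESurf.dy h1, ESurf.dy h3⟩
  | projPairSnd _ h1 h2 h3 h4 _ => exact ⟨ESurf.dy h2, ESurf.dy h4⟩
  | projEncFst _ h1 h2 h3 h4 _ => exact ⟨ESurf.dy h1, ESurf.dy h3⟩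
  | projEncSnd _ h1 h2 h3 h4 _ => exact ⟨ESurf.dy h2, ESurf.dy h4⟩

end AuxEq

section AuxRun

lemma app_id (t : Term) : Subst.app (fun x => Term.var x) t = t := by
  induction t with
  | name n => rfl
  | var x => rfl
  | pair a b iha ihb => simp [Subst.app, iha, ihb]
  | enc a b iha ihb => simp [Subst.app, iha, ihb]

lemma st_size_strict {s t : Term} (h : s ∈ t.subterms) (hne : s ≠ t) :
    tsize s < tsize t := by
  have := st_app_size_lt (σ' := fun x => Term.var x) h hne
  simpa [app_id] using this

lemma st_antisym {s t : Term} (h : s ∈ t.subterms) (h' : t ∈ s.subterms) : s = t := by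
  by_contra hne
  have h1 := st_size_strict h hne
  have h2 := st_size_strict h' (Ne.symm hne)
  omega

namespace RunSetting

variable (R : RunSetting)

/-- the intruder's instantiated knowledge at stage i -/
def RX (i : ℕ) : Set Term := Subst.app R.σ '' R.T i

/-- the set of typed terms for the theorem -/
def RG : Set Term := Subst.app R.σ '' R.D ∪ varTerms R.Vq

lemma Tmono' {i j : ℕ} (hij : i ≤ j) : R.T i ⊆ R.T j := by
  induction j with
  | zero => simpa [Nat.le_zero.1 hij]
  | succ j ih =>
      rcases Nat.lt_or_ge i (j+1) with h | h
      · exact subset_trans (ih (by omega)) (R.hTmono j)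
      · have : i = j + 1 := by omega
        simp [this]

lemma RXmono {i j : ℕ} (hij : i ≤ j) : R.RX i ⊆ R.RX j :=
  Set.image_mono (R.Tmono' hij)

lemma Emem : ∀ k, k ≤ R.n → ∀ f ∈ R.E k,
    ∃ h, 1 ≤ h ∧ h ≤ k ∧ f = ((R.α h).l, (R.α h).r) := by
  intro k
  induction k with
  | zero => intro _ f hf; rw [R.hE0] at hf; exact absurd hf (Set.notMem_empty f)
  | succ k ih =>
      intro hk f hf
      rw [R.hEstep (k+1) (by omega) hk] at hf
      simp only [Nat.add_sub_cancel] at hf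
      rcases hf with hf | hf
      · rcases ih (by omega) f hf with ⟨h, h1, h2, h3⟩
        exact ⟨h, h1, by omega, h3⟩
      · exact ⟨k+1, by omega, le_refl _, hf⟩

lemma alphafv {h y : ℕ} (h1 : 1 ≤ h) (h2 : h ≤ R.n)
    (hy : y ∈ (R.α h).l.tvars ∪ (R.α h).r.tvars) (hyVq : y ∉ R.Vq) :
    ∃ j, 1 ≤ j ∧ j ≤ h ∧ y ∈ (R.β j).fv := by
  have hfv : y ∈ (R.α h).fv := by
    refine ⟨hy, fun hbv => hyVq (R.hαbv h h1 h2 hbv)⟩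
  exact R.hfvEarlier h h1 h2 y hfv

lemma betafv {h y : ℕ} (h1 : 1 ≤ h) (h2 : h ≤ R.n)
    (hy : y ∈ (R.β h).l.tvars ∪ (R.β h).r.tvars) (hyVq : y ∉ R.Vq) :
    y ∈ (R.β h).fv :=
  ⟨hy, fun hbv => hyVq (R.hβbv h h1 h2 hbv)⟩

lemma Tvar : ∀ k, k ≤ R.n → ∀ t ∈ R.T k, ∀ y ∈ t.tvars, y ∉ R.Vq →
    ∃ j, 1 ≤ j ∧ j ≤ k ∧ y ∈ (R.β j).fv := by
  intro k
  induction k with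
  | zero =>
      intro _ t ht y hy _
      have := R.hT0 t ht
      rw [Term.ground, Set.eq_empty_iff_forall_notMem] at this
      exact absurd hy (this y)
  | succ k ih =>
      intro hk t ht y hy hyVq
      rw [R.hTstep (k+1) (by omega) hk] at ht
      simp only [Nat.add_sub_cancel] at ht
      rcases ht with (ht | ht) | ht
      · rcases ih (by omega) t ht y hy hyVq with ⟨j, hj1, hj2, hj3⟩
        exact ⟨j, hj1, by omega, hj3⟩
      · -- t ∈ pubs Vq (α (k+1))
        have hsub : t ∈ (R.α (k+1)).subterms := ht.1
        have hy' : y ∈ (R.α (k+1)).l.tvars ∪ (R.α (k+1)).r.tvars := by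
          rcases hsub with hsub | hsub
          · exact Or.inl (tvars_mono_st hsub hy)
          · exact Or.inr (tvars_mono_st hsub hy)
        rcases R.alphafv (by omega) hk hy' hyVq with ⟨j, hj1, hj2, hj3⟩
        exact ⟨j, hj1, by omega, hj3⟩
      · rcases ht with ⟨z, hz, rfl⟩
        simp [Term.tvars] at hy
        subst hy
        exact absurd (R.hαbv (k+1) (by omega) hk hz) hyVq

/-- soundness of the run: the two sides of each α are ω-equal -/
lemma alphasound : ∀ h, 1 ≤ h → h ≤ R.n →
    Subst.app R.ω (R.α h).l = Subst.app R.ω (R.α h).r := by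
  intro h
  induction h using Nat.strong_induction_on with
  | _ h IH =>
      intro h1 h2
      -- F h pairs are ω-true
      have hF : ∀ f ∈ R.F h, Subst.app R.ω f.1 = Subst.app R.ω f.2 := by
        intro f hf
        rcases R.hFmem h h1 h2 f hf with ⟨j, hj1, hj2, rfl⟩
        -- β j is ω-true, using hμeq j and soundness of E (j-1)
        have hE : ∀ e ∈ pairImg R.σ (R.E (j-1)),
            Subst.app R.ω e.1 = Subst.app R.ω e.2 := by
          rintro e ⟨f', hf', rfl⟩
          rcases R.Emem (j-1) (by omega) f' hf' with ⟨h', hh1, hh2, rfl⟩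
          have := IH h' (by omega) hh1 (by omega)
          simpa [absorb R.hωσ] using this
        have := eqdrv_sound hE (R.hμeq j hj1 (by omega))
        simpa [absorb R.hωσ, absorb (R.hωμ j hj1 (by omega))] using this
      have hF' : ∀ e ∈ pairImg R.σ (R.F h),
          Subst.app R.ω e.1 = Subst.app R.ω e.2 := by
        rintro e ⟨f, hf, rfl⟩
        simpa [absorb R.hωσ] using hF f hf
      have := eqdrv_sound hF' (R.hθeq h h1 h2)
      simpa [absorb R.hωσ, absorb (R.hωθ h h1 h2)] using this

/-- ω-preimage version for pairImg of F -/
lemma alphasound' : True := trivial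

/-- a Vq-free side of α h is one of its public terms, hence in T h -/
lemma side_pub {h : ℕ} (h1 : 1 ≤ h) (h2 : h ≤ R.n) {w w' : Term}
    (hside : (w = (R.α h).l ∧ w' = (R.α h).r) ∨ (w = (R.α h).r ∧ w' = (R.α h).l))
    (hVqf : w.tvars ∩ R.Vq = ∅) : w ∈ R.T h := by
  have hww' : Subst.app R.ω w = Subst.app R.ω w' := by
    rcases hside with ⟨rfl, rfl⟩ | ⟨rfl, rfl⟩
    · exact R.alphasound h h1 h2
    · exact (R.alphasound h h1 h2).symm
  have hwsub : w ∈ (R.α h).subterms := by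
    rcases hside with ⟨rfl, _⟩ | ⟨rfl, _⟩
    · exact Or.inl (st_self _)
    · exact Or.inr (st_self _)
  have hpub : w ∈ pubs R.Vq (R.α h) := by
    refine ⟨hwsub, hVqf, ?_⟩
    rintro ⟨u, hu, hne, hwu, _⟩
    have hu' : u ∈ w.subterms ∪ w'.subterms := by
      rcases hside with ⟨rfl, rfl⟩ | ⟨rfl, rfl⟩
      · exact hu
      · rcases hu with hu | hu
        exacts [Or.inr hu, Or.inl hu]
    rcases hu' with hu' | hu'
    · exact hne (st_antisym hu' hwu).symm
    · have hw : w ∈ w'.subterms := st_trans hu' hwu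
      by_cases he : w = w'
      · exact hne (st_antisym (he ▸ hu') hwu).symm
      · have := st_app_size_lt (σ' := R.ω) hw he
        rw [hww'] at this
        omega
  rw [R.hTstep h h1 h2]
  exact Or.inl (Or.inr hpub)

lemma mem_C_T {k : ℕ} {t u : Term} (hk : k ≤ R.n) (ht : t ∈ R.T k)
    (hu : u ∈ t.subterms) : u ∈ R.C := by
  simp only [RunSetting.C, Set.mem_iUnion]
  refine ⟨k, hk, Or.inl ?_⟩
  simp only [sSubterms, Set.mem_iUnion]
  exact ⟨t, Or.inl ht, hu⟩

lemma mem_C_E {k : ℕ} {u : Term} (hk : k ≤ R.n) {e : Term × Term} (he : e ∈ R.E k)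
    (hu : u ∈ e.1.subterms ∪ e.2.subterms) : u ∈ R.C := by
  simp only [RunSetting.C, Set.mem_iUnion]
  refine ⟨k, hk, Or.inr ?_⟩
  simp only [pairSubterms, Set.mem_iUnion]
  exact ⟨e, Or.inl he, hu⟩

lemma mem_G_img {u : Term} (hC : u ∈ R.C) (hnv : ∀ v, u ≠ Term.var v) :
    Subst.app R.σ u ∈ R.RG := by
  refine Or.inl ⟨u, ⟨hC, ?_⟩, rfl⟩
  rintro ⟨v, rfl⟩
  exact hnv v rfl

lemma mem_G_var {y : ℕ} (hy : y ∈ R.Vq) : Term.var y ∈ R.RG :=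
  Or.inr ⟨y, hy, rfl⟩

end RunSetting

end AuxRun

namespace RunSetting

variable (R : RunSetting)

/-- typed normal proof of `t` from the stage-`i` intruder knowledge -/
def TNP (i : ℕ) (t : Term) : Prop :=
  ∃ d : DPT, DPT.valid R.inv (R.RX i) d ∧ DPT.concl R.inv d = some t ∧
    DPT.normal d ∧ DPT.typed R.inv R.RG d

lemma TNP_mono {i j : ℕ} {t : Term} (hij : i ≤ j) (h : R.TNP i t) : R.TNP j t := by
  rcases h with ⟨d, hv, hc, hn, ht⟩
  exact ⟨d, DPT.valid_mono (R.RXmono hij) hv, hc, hn, ht⟩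

lemma TNP_pair {i : ℕ} {a b : Term} (ha : R.TNP i a) (hb : R.TNP i b) :
    R.TNP i (Term.pair a b) := by
  rcases ha with ⟨da, hva, hca, hna, hta⟩
  rcases hb with ⟨db, hvb, hcb, hnb, htb⟩
  exact ⟨DPT.pair da db, ⟨hva, hvb⟩, by rw [DPT.concl, hca, hcb], ⟨hna, hnb⟩, hta, htb⟩

lemma TNP_enc {i : ℕ} {a b : Term} (ha : R.TNP i a) (hb : R.TNP i b) :
    R.TNP i (Term.enc a b) := by
  rcases ha with ⟨da, hva, hca, hna, hta⟩
  rcases hb with ⟨db, hvb, hcb, hnb, htb⟩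
  exact ⟨DPT.enc da db, ⟨hva, hvb⟩, by rw [DPT.concl, hca, hcb], ⟨hna, hnb⟩, hta, htb⟩

end RunSetting

/-- the decomposability invariant for subterms of the intruder's knowledge -/
inductive RunSetting.TG (R : RunSetting) (i : ℕ) : Term → Prop
  | base {c} : c ∈ R.RG → RunSetting.TG R i c
  | pr {a b} : RunSetting.TG R i a → RunSetting.TG R i b → R.TNP i a → R.TNP i b →
      RunSetting.TG R i (Term.pair a b)
  | en {a b} : RunSetting.TG R i a → RunSetting.TG R i b → R.TNP i a → R.TNP i b →
      RunSetting.TG R i (Term.enc a b)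

namespace RunSetting

variable (R : RunSetting)

lemma TG_mono {i j : ℕ} {t : Term} (hij : i ≤ j) (h : R.TG i t) : R.TG j t := by
  induction h with
  | base h => exact .base h
  | pr _ _ h1 h2 ih1 ih2 => exact .pr ih1 ih2 (R.TNP_mono hij h1) (R.TNP_mono hij h2)
  | en _ _ h1 h2 ih1 ih2 => exact .en ih1 ih2 (R.TNP_mono hij h1) (R.TNP_mono hij h2)

/-- the key hypothesis about free variables of received assertions -/
def VCstmt (j : ℕ) : Prop :=
  ∀ x ∈ (R.β j).fv, (R.σ x).ground ∧ ∀ s ∈ (R.σ x).subterms, R.TG (j-1) s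

/-- every subterm of the instantiated intruder knowledge is decomposable -/
lemma STlem {k : ℕ} (hk : k ≤ R.n) (hVC : ∀ j, 1 ≤ j → j ≤ k → R.VCstmt j) :
    ∀ s ∈ stX (R.RX k), R.TG k s := by
  intro s hs
  obtain ⟨w, hw, hsw⟩ : ∃ w ∈ R.RX k, s ∈ w.subterms := by
    simpa [stX] using hs
  obtain ⟨t0, ht0, rfl⟩ := hw
  rcases st_app hsw with ⟨u, hu, hnv, rfl⟩ | ⟨y, hy, hsy⟩
  · exact .base (R.mem_G_img (R.mem_C_T hk ht0 hu) hnv)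
  · by_cases hyVq : y ∈ R.Vq
    · rw [R.hσVq y hyVq] at hsy
      simp [Term.subterms] at hsy; subst hsy
      exact .base (R.mem_G_var hyVq)
    · rcases R.Tvar k hk t0 ht0 y hy hyVq with ⟨j, hj1, hj2, hj3⟩
      exact R.TG_mono (by omega) ((hVC j hj1 hj2 y hj3).2 s hsy)

/-- repairing normal proofs into typed normal proofs -/
lemma AUX {k : ℕ} (hk : k ≤ R.n) (hVC : ∀ j, 1 ≤ j → j ≤ k → R.VCstmt j) :
    ∀ d : DPT, DPT.valid R.inv (R.RX k) d → DPT.normal d →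
      ∀ m, DPT.concl R.inv d = some m → R.TNP k m := by
  intro d
  induction d with
  | ax t =>
      intro hv _ m hm
      simp [DPT.concl] at hm; subst hm
      have := R.STlem hk hVC t (mem_stX hv)
      cases this with
      | base hG => exact ⟨DPT.ax t, hv, rfl, trivial, hG⟩
      | pr _ _ h1 h2 => exact R.TNP_pair h1 h2
      | en _ _ h1 h2 => exact R.TNP_enc h1 h2
  | pair p q ihp ihq =>
      intro hv hn m hm
      rcases DPT.pair_concl_inv hm with ⟨a, b, rfl, h1, h2⟩
      exact R.TNP_pair (ihp hv.1 hn.1 a h1) (ihq hv.2 hn.2 b h2)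
  | enc p q ihp ihq =>
      intro hv hn m hm
      rcases DPT.enc_concl_inv hm with ⟨a, b, rfl, h1, h2⟩
      exact R.TNP_enc (ihp hv.1 hn.1 a h1) (ihq hv.2 hn.2 b h2)
  | fst p ihp =>
      intro hv hn m hm
      rcases hv with ⟨hp, a, b, hab⟩
      rw [DPT.concl, hab] at hm; simp at hm; subst hm
      have hvfst : DPT.valid R.inv (R.RX k) (DPT.fst p) := ⟨hp, a, b, hab⟩
      have hmst : a ∈ stX (R.RX k) := by
        refine DPT.normal_subterm hvfst hn (by simp [DPT.endsConstructor]) ?_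
        rw [DPT.concl, hab]
      have hTG := R.STlem hk hVC a hmst
      cases hTG with
      | pr _ _ h1 h2 => exact R.TNP_pair h1 h2
      | en _ _ h1 h2 => exact R.TNP_enc h1 h2
      | base hG =>
          rcases ihp hp hn.1 _ hab with ⟨Q, hQv, hQc, hQn, hQt⟩
          by_cases hec : DPT.endsConstructor Q
          · rcases DPT.endsCons_pair hec hQc with ⟨q1, q2, rfl, h1, h2⟩
            exact ⟨q1, hQv.1, h1, hQn.1, hQt.1⟩
          · refine ⟨DPT.fst Q, ⟨hQv, a, b, hQc⟩, by rw [DPT.concl, hQc], ⟨hQn, hec⟩,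
              hQt, ?_⟩
            intro a' ha'
            rw [DPT.concl, hQc] at ha'
            simp at ha'; subst ha'; exact hG
  | snd p ihp =>
      intro hv hn m hm
      rcases hv with ⟨hp, a, b, hab⟩
      rw [DPT.concl, hab] at hm; simp at hm; subst hm
      have hvsnd : DPT.valid R.inv (R.RX k) (DPT.snd p) := ⟨hp, a, b, hab⟩
      have hmst : b ∈ stX (R.RX k) := by
        refine DPT.normal_subterm hvsnd hn (by simp [DPT.endsConstructor]) ?_
        rw [DPT.concl, hab]
      have hTG := R.STlem hk hVC b hmst
      cases hTG with
      | pr _ _ h1 h2 => exact R.TNP_pair h1 h2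
      | en _ _ h1 h2 => exact R.TNP_enc h1 h2
      | base hG =>
          rcases ihp hp hn.1 _ hab with ⟨Q, hQv, hQc, hQn, hQt⟩
          by_cases hec : DPT.endsConstructor Q
          · rcases DPT.endsCons_pair hec hQc with ⟨q1, q2, rfl, h1, h2⟩
            exact ⟨q2, hQv.2, h2, hQn.2, hQt.2⟩
          · refine ⟨DPT.snd Q, ⟨hQv, a, b, hQc⟩, by rw [DPT.concl, hQc], ⟨hQn, hec⟩,
              hQt, ?_⟩
            intro a' ha'
            rw [DPT.concl, hQc] at ha'
            simp at ha'; subst ha'; exact hG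
  | dec p q ihp ihq =>
      intro hv hn m hm
      rcases hv with ⟨hp, hq, a, kk, hak, hkk⟩
      rw [DPT.concl, hak, hkk] at hm; simp at hm; subst hm
      have hvdec : DPT.valid R.inv (R.RX k) (DPT.dec p q) := ⟨hp, hq, a, kk, hak, hkk⟩
      have hmst : a ∈ stX (R.RX k) := by
        refine DPT.normal_subterm hvdec hn
          (by simp [DPT.endsConstructor]) ?_
        rw [DPT.concl, hak, hkk]; simp
      have hTG := R.STlem hk hVC a hmst
      cases hTG with
      | pr _ _ h1 h2 => exact R.TNP_pair h1 h2
      | en _ _ h1 h2 => exact R.TNP_enc h1 h2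
      | base hG =>
          rcases ihp hp hn.1 _ hak with ⟨Q, hQv, hQc, hQn, hQt⟩
          rcases ihq hq hn.2.1 _ hkk with ⟨K, hKv, hKc, hKn, hKt⟩
          by_cases hec : DPT.endsConstructor Q
          · rcases DPT.endsCons_enc hec hQc with ⟨q1, q2, rfl, h1, h2⟩
            exact ⟨q1, hQv.1, h1, hQn.1, hQt.1⟩
          · refine ⟨DPT.dec Q K, ⟨hQv, hKv, a, kk, hQc, hKc⟩,
              by rw [DPT.concl, hQc, hKc]; simp, ⟨hQn, hKn, hec⟩, hQt, hKt, ?_⟩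
            intro a' ha'
            rw [DPT.concl, hQc, hKc] at ha'
            simp at ha'; subst ha'; exact hG

/-- main typing lemma, stage version -/
lemma Hlem {k : ℕ} (hk : k ≤ R.n) (hVC : ∀ j, 1 ≤ j → j ≤ k → R.VCstmt j) :
    ∀ t, dy R.inv (R.RX k) t → R.TNP k t := by
  intro t h
  rcases DPT.normalize h with ⟨d, hv, hc, hn⟩
  exact R.AUX hk hVC d hv hn t hc

/-- subterms of derivable terms are decomposable -/
lemma DYST {k : ℕ} (hk : k ≤ R.n) (hVC : ∀ j, 1 ≤ j → j ≤ k → R.VCstmt j) :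
    ∀ d : DPT, DPT.valid R.inv (R.RX k) d → DPT.normal d →
      ∀ m, DPT.concl R.inv d = some m → ∀ s ∈ m.subterms, R.TG k s := by
  intro d
  induction d with
  | ax t =>
      intro hv _ m hm s hs
      simp [DPT.concl] at hm; subst hm
      exact R.STlem hk hVC s (stX_closed (mem_stX hv) hs)
  | pair p q ihp ihq =>
      intro hv hn m hm s hs
      rcases DPT.pair_concl_inv hm with ⟨a, b, rfl, h1, h2⟩
      simp [Term.subterms] at hs
      rcases hs with rfl | hs | hs
      · exact .pr (ihp hv.1 hn.1 a h1 a (st_self a)) (ihq hv.2 hn.2 b h2 b (st_self b))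
          (R.AUX hk hVC p hv.1 hn.1 a h1) (R.AUX hk hVC q hv.2 hn.2 b h2)
      · exact ihp hv.1 hn.1 a h1 s hs
      · exact ihq hv.2 hn.2 b h2 s hs
  | enc p q ihp ihq =>
      intro hv hn m hm s hs
      rcases DPT.enc_concl_inv hm with ⟨a, b, rfl, h1, h2⟩
      simp [Term.subterms] at hs
      rcases hs with rfl | hs | hs
      · exact .en (ihp hv.1 hn.1 a h1 a (st_self a)) (ihq hv.2 hn.2 b h2 b (st_self b))
          (R.AUX hk hVC p hv.1 hn.1 a h1) (R.AUX hk hVC q hv.2 hn.2 b h2)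
      · exact ihp hv.1 hn.1 a h1 s hs
      · exact ihq hv.2 hn.2 b h2 s hs
  | fst p _ =>
      intro hv hn m hm s hs
      have := DPT.normal_subterm hv hn (by simp [DPT.endsConstructor]) hm
      exact R.STlem hk hVC s (stX_closed this hs)
  | snd p _ =>
      intro hv hn m hm s hs
      have := DPT.normal_subterm hv hn (by simp [DPT.endsConstructor]) hm
      exact R.STlem hk hVC s (stX_closed this hs)
  | dec p q _ _ =>
      intro hv hn m hm s hs
      have := DPT.normal_subterm hv hn (by simp [DPT.endsConstructor]) hm
      exact R.STlem hk hVC s (stX_closed this hs)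

/-- ground surface terms of stage-k derivable equalities are derivable -/
lemma ESDY {k : ℕ} (hk : k ≤ R.n) :
    ∀ t, ESurf R.inv (R.RX k) (pairImg R.σ (R.E k)) t → t.ground →
      dy R.inv (R.RX k) t := by
  intro t hES
  induction hES with
  | dy h => exact fun _ => h
  | @side t e he hte =>
      intro hg
      rcases he with ⟨f, hf, rfl⟩
      rcases R.Emem k hk f hf with ⟨h, hh1, hh2, rfl⟩
      have main : ∀ w w' : Term,
          ((w = (R.α h).l ∧ w' = (R.α h).r) ∨ (w = (R.α h).r ∧ w' = (R.α h).l)) →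
          t = Subst.app R.σ w → dy R.inv (R.RX k) t := by
        intro w w' hside heq
        subst heq
        have hVqf : w.tvars ∩ R.Vq = ∅ := by
          rw [Set.eq_empty_iff_forall_notMem]
          rintro y ⟨hyw, hyVq⟩
          have h1 : y ∈ (Subst.app R.σ w).tvars := by
            refine tvars_app.2 ⟨y, hyw, ?_⟩
            rw [R.hσVq y hyVq]; simp [Term.tvars]
          rw [Term.ground, Set.eq_empty_iff_forall_notMem] at hg
          exact hg y h1
        have := R.side_pub hh1 (le_trans hh2 hk) hside hVqf
        exact dy.ax (R.RXmono hh2 ⟨w, this, rfl⟩)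
      rcases hte with h1 | h1
      · exact main _ _ (Or.inl ⟨rfl, rfl⟩) h1
      · exact main _ _ (Or.inr ⟨rfl, rfl⟩) h1
  | pr _ _ iha ihb =>
      intro hg
      rw [Term.ground, Term.tvars, Set.union_empty_iff] at hg
      exact dy.pair (iha hg.1) (ihb hg.2)
  | en _ _ iha ihb =>
      intro hg
      rw [Term.ground, Term.tvars, Set.union_empty_iff] at hg
      exact dy.enc (iha hg.1) (ihb hg.2)

/-- variables of stage-k surface terms are quantifiable or σ-ground -/
lemma ESurfVARS {k : ℕ} (hk : k ≤ R.n) (hVC : ∀ j, 1 ≤ j → j ≤ k → R.VCstmt j) :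
    ∀ t, ESurf R.inv (R.RX k) (pairImg R.σ (R.E k)) t →
      ∀ v ∈ t.tvars, v ∈ R.Vq ∨ (R.σ v).ground := by
  intro t hES
  induction hES with
  | dy h =>
      intro v hv
      have := dy_tvars h hv
      simp only [Set.mem_iUnion] at this
      obtain ⟨w, ⟨t0, ht0, rfl⟩, hvw⟩ := this
      rcases tvars_app.1 hvw with ⟨y, hy, hvy⟩
      by_cases hyVq : y ∈ R.Vq
      · rw [R.hσVq y hyVq] at hvy
        simp [Term.tvars] at hvy; subst hvy
        exact Or.inl hyVq
      · rcases R.Tvar k hk t0 ht0 y hy hyVq with ⟨j, hj1, hj2, hj3⟩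
        have := (hVC j hj1 hj2 y hj3).1
        rw [Term.ground, Set.eq_empty_iff_forall_notMem] at this
        exact absurd hvy (this v)
  | @side t e he hte =>
      intro v hv
      rcases he with ⟨f, hf, rfl⟩
      rcases R.Emem k hk f hf with ⟨h, hh1, hh2, rfl⟩
      have hw : ∃ w, (w = (R.α h).l ∨ w = (R.α h).r) ∧ t = Subst.app R.σ w := by
        rcases hte with h1 | h1
        exacts [⟨_, Or.inl rfl, h1⟩, ⟨_, Or.inr rfl, h1⟩]
      obtain ⟨w, hwside, rfl⟩ := hw
      rcases tvars_app.1 hv with ⟨y, hy, hvy⟩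
      by_cases hyVq : y ∈ R.Vq
      · rw [R.hσVq y hyVq] at hvy
        simp [Term.tvars] at hvy; subst hvy
        exact Or.inl hyVq
      · have hy' : y ∈ (R.α h).l.tvars ∪ (R.α h).r.tvars := by
          rcases hwside with rfl | rfl
          exacts [Or.inl hy, Or.inr hy]
        rcases R.alphafv hh1 (le_trans hh2 hk) hy' hyVq with ⟨j, hj1, hj2, hj3⟩
        have := (hVC j hj1 (le_trans hj2 hh2) y hj3).1
        rw [Term.ground, Set.eq_empty_iff_forall_notMem] at this
        exact absurd hvy (this v)
  | pr _ _ iha ihb =>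
      intro v hv
      rw [Term.tvars] at hv
      rcases hv with hv | hv
      exacts [iha v hv, ihb v hv]
  | en _ _ iha ihb =>
      intro v hv
      rw [Term.tvars] at hv
      rcases hv with hv | hv
      exacts [iha v hv, ihb v hv]

/-- ground subterms of stage-k surface terms are decomposable -/
lemma ESTG {k : ℕ} (hk : k ≤ R.n) (hVC : ∀ j, 1 ≤ j → j ≤ k → R.VCstmt j) :
    ∀ t, ESurf R.inv (R.RX k) (pairImg R.σ (R.E k)) t →
      ∀ s ∈ t.subterms, s.ground → R.TG k s := by
  intro t hES
  induction hES with
  | dy h =>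
      intro s hs _
      rcases DPT.normalize h with ⟨d, hv, hc, hn⟩
      exact R.DYST hk hVC d hv hn _ hc s hs
  | @side t e he hte =>
      intro s hs hg
      rcases he with ⟨f, hf, rfl⟩
      rcases R.Emem k hk f hf with ⟨h, hh1, hh2, rfl⟩
      have hEh : ((R.α h).l, (R.α h).r) ∈ R.E h := by
        rw [R.hEstep h hh1 (le_trans hh2 hk)]
        exact Or.inr rfl
      have hw : ∃ w, (w = (R.α h).l ∨ w = (R.α h).r) ∧ t = Subst.app R.σ w := by
        rcases hte with h1 | h1
        exacts [⟨_, Or.inl rfl, h1⟩, ⟨_, Or.inr rfl, h1⟩]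
      obtain ⟨w, hwside, rfl⟩ := hw
      rcases st_app hs with ⟨u, hu, hnv, rfl⟩ | ⟨y, hy, hsy⟩
      · have huC : u ∈ R.C := by
          refine R.mem_C_E (le_trans hh2 hk) hEh ?_
          rcases hwside with rfl | rfl
          exacts [Or.inl hu, Or.inr hu]
        exact .base (R.mem_G_img huC hnv)
      · by_cases hyVq : y ∈ R.Vq
        · rw [R.hσVq y hyVq] at hsy
          simp [Term.subterms] at hsy; subst hsy
          exact .base (R.mem_G_var hyVq)
        · have hy' : y ∈ (R.α h).l.tvars ∪ (R.α h).r.tvars := by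
            rcases hwside with rfl | rfl
            exacts [Or.inl hy, Or.inr hy]
          rcases R.alphafv hh1 (le_trans hh2 hk) hy' hyVq with ⟨j, hj1, hj2, hj3⟩
          exact R.TG_mono (by omega : j - 1 ≤ k)
            ((hVC j hj1 (le_trans hj2 hh2) y hj3).2 s hsy)
  | @pr a b ha hb iha ihb =>
      intro s hs hg
      simp [Term.subterms] at hs
      rcases hs with rfl | hs | hs
      · rw [Term.ground, Term.tvars, Set.union_empty_iff] at hg
        exact .pr (iha a (st_self a) hg.1) (ihb b (st_self b) hg.2)
          (R.Hlem hk hVC a (R.ESDY hk a ha hg.1))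
          (R.Hlem hk hVC b (R.ESDY hk b hb hg.2))
      · exact iha s hs hg
      · exact ihb s hs hg
  | @en a b ha hb iha ihb =>
      intro s hs hg
      simp [Term.subterms] at hs
      rcases hs with rfl | hs | hs
      · rw [Term.ground, Term.tvars, Set.union_empty_iff] at hg
        exact .en (iha a (st_self a) hg.1) (ihb b (st_self b) hg.2)
          (R.Hlem hk hVC a (R.ESDY hk a ha hg.1))
          (R.Hlem hk hVC b (R.ESDY hk b hb hg.2))
      · exact iha s hs hg
      · exact ihb s hs hg

/-- the variable condition holds at every stage -/
lemma VCall : ∀ j, 1 ≤ j → j ≤ R.n → R.VCstmt j := by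
  intro j
  induction j using Nat.strong_induction_on with
  | _ j IH =>
      intro hj1 hjn x hx
      have hVCk : ∀ j', 1 ≤ j' → j' ≤ j - 1 → R.VCstmt j' :=
        fun j' h1 h2 => IH j' (by omega) h1 (by omega)
      have hkn : j - 1 ≤ R.n := by omega
      have hxVq : x ∉ R.Vq := by
        intro hVq
        have := R.hβfv j hj1 hjn
        rw [Set.eq_empty_iff_forall_notMem] at this
        exact this x ⟨hx, hVq⟩
      have hμx : (R.μ j) x = Term.var x := by
        by_contra hc
        exact hx.2 (R.hμdom j hj1 hjn hc)
      have hES := eqdrv_esurf (R.hμeq j hj1 hjn)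
      have hxw : ∃ w, x ∈ w.tvars ∧
          ESurf R.inv (R.RX (j-1)) (pairImg R.σ (R.E (j-1)))
            (Subst.app R.σ (Subst.app (R.μ j) w)) := by
        rcases hx.1 with h1 | h1
        exacts [⟨(R.β j).l, h1, hES.1⟩, ⟨(R.β j).r, h1, hES.2⟩]
      obtain ⟨w, hxw, hESw⟩ := hxw
      have hxt : x ∈ (Subst.app (R.μ j) w).tvars := tvars_app_of_var hxw hμx
      have hg : (R.σ x).ground := by
        by_cases hdom : R.σ x = Term.var x
        · have hxin : x ∈ (Subst.app R.σ (Subst.app (R.μ j) w)).tvars :=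
            tvars_app_of_var hxt hdom
          rcases R.ESurfVARS hkn hVCk _ hESw x hxin with hVq | hgr
          · exact absurd hVq hxVq
          · rw [hdom] at hgr
            rw [Term.ground, Set.eq_empty_iff_forall_notMem] at hgr
            exact absurd (by simp [Term.tvars] : x ∈ (Term.var x).tvars) (hgr x)
        · exact R.hσground x hdom
      refine ⟨hg, ?_⟩
      intro s hs
      have hσx : R.σ x ∈ (Subst.app R.σ (Subst.app (R.μ j) w)).subterms :=
        mem_st_app_of_var hxt
      exact R.ESTG hkn hVCk _ hESw s (st_trans hσx hs) (ground_st hg hs)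

end RunSetting

/-- Theorem (rustur): typed normal DY proofs. -/
theorem stmt13 (R : RunSetting) (t : Term) (i : ℕ) (hi : i ≤ R.n)
    (h : dy R.inv (Subst.app R.σ '' R.T i) t) :
    ∃ d : DPT, DPT.valid R.inv (Subst.app R.σ '' R.T i) d ∧
      DPT.concl R.inv d = some t ∧ DPT.normal d ∧
      DPT.typed R.inv (Subst.app R.σ '' R.D ∪ varTerms R.Vq) d := by
  have hVC : ∀ j, 1 ≤ j → j ≤ i → R.VCstmt j :=
    fun j a b => R.VCall j a (le_trans b hi)
  exact R.Hlem hi hVC t h
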